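/- (Osgood's lemma, case a = 0.) Let L be a measurable positive function and γ a positive locally integrable function, each defined on [t₀, t₁]. Let μ : [0, ∞) → [0, ∞) be a continuous nondecreasing function with μ(0) = 0 satisfying ∫₀¹ ds / μ(s) = ∞. If L(t) ≤ ∫_{t₀}^t γ(s) μ(L(s)) ds for all t ∈ [t₀, t₁], then L ≡ 0 on [t₀, t₁]. -/

import Mathlib

open Set Filter Topology MeasureTheory

/-- Osgood's lemma, case `a = 0`: if `L(t) ≤ ∫_{t₀}^t γ(s) μ(L(s)) ds` on `[t₀, t₁]`, with `L`
measurable nonnegative, `γ` positive integrable, `μ : [0,∞) → [0,∞)` continuous nondecreasing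
with `μ(0) = 0` and `∫₀¹ ds/μ(s) = ∞`, then `L ≡ 0` on `[t₀, t₁]`. -/
theorem stmt_8 (t₀ t₁ : ℝ) (ht : t₀ ≤ t₁) (L γ μ : ℝ → ℝ)
    (hLmeas : Measurable L) (hLnonneg : ∀ t ∈ Icc t₀ t₁, 0 ≤ L t)
    (hγpos : ∀ t ∈ Icc t₀ t₁, 0 < γ t) (hγint : IntegrableOn γ (Icc t₀ t₁))
    (hμc : ContinuousOn μ (Ici 0)) (hμmono : MonotoneOn μ (Ici 0))
    (hμnonneg : ∀ x ≥ (0:ℝ), 0 ≤ μ x) (hμ0 : μ 0 = 0)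
    (hμdiv : ∫⁻ s in Ioo (0:ℝ) 1, ENNReal.ofReal (1 / μ s) = ⊤)
    (hL : ∀ t ∈ Icc t₀ t₁, L t ≤ ∫ s in t₀..t, γ s * μ (L s)) :
    ∀ t ∈ Icc t₀ t₁, L t = 0 := by
  intro t₂ ht₂
  set f : ℝ → ℝ := fun s => γ s * μ (L s) with hf
  have ht₀₂ : t₀ ≤ t₂ := ht₂.1
  have hsub : Icc t₀ t₂ ⊆ Icc t₀ t₁ := Icc_subset_Icc_right ht₂.2
  by_cases hInt : IntegrableOn f (Icc t₀ t₂)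
  swap
  · -- non-integrable case: the interval integral is 0 by convention
    have h1 : ¬ IntervalIntegrable f volume t₀ t₂ := by
      intro h
      apply hInt
      rw [intervalIntegrable_iff, uIoc_of_le ht₀₂] at h
      exact (integrableOn_Icc_iff_integrableOn_Ioc (by simp)).2 h
    have h2 := hL t₂ ht₂
    rw [intervalIntegral.integral_undef h1] at h2
    exact le_antisymm h2 (hLnonneg t₂ ht₂)
  · -- main case
    have hfnonneg : ∀ s ∈ Icc t₀ t₁, 0 ≤ f s := fun s hs =>
      mul_nonneg (hγpos s hs).le (hμnonneg _ (hLnonneg s hs))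
    set G : ℝ → ℝ := fun τ => ∫ s in t₀..τ, f s with hG
    have hfii : ∀ a ∈ Icc t₀ t₂, ∀ b ∈ Icc t₀ t₂, IntervalIntegrable f volume a b := by
      intro a ha b hb
      rw [intervalIntegrable_iff]
      refine hInt.mono_set ?_
      refine (Set.uIoc_subset_uIcc (a := a) (b := b)).trans ?_
      exact uIcc_subset_Icc ha hb
    have hγii : ∀ a ∈ Icc t₀ t₁, ∀ b ∈ Icc t₀ t₁, IntervalIntegrable γ volume a b := by
      intro a ha b hb
      rw [intervalIntegrable_iff]
      refine hγint.mono_set ?_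
      refine (Set.uIoc_subset_uIcc (a := a) (b := b)).trans ?_
      exact uIcc_subset_Icc ha hb
    have ht₀mem : t₀ ∈ Icc t₀ t₂ := left_mem_Icc.2 ht₀₂
    have ht₂mem : t₂ ∈ Icc t₀ t₂ := right_mem_Icc.2 ht₀₂
    have hGdiff : ∀ a ∈ Icc t₀ t₂, ∀ b ∈ Icc t₀ t₂, G b - G a = ∫ s in a..b, f s := by
      intro a ha b hb
      have h := intervalIntegral.integral_add_adjacent_intervals
        (hfii t₀ ht₀mem a ha) (hfii a ha b hb)
      simp only [hG]
      linarith
    have hGmono : ∀ a ∈ Icc t₀ t₂, ∀ b ∈ Icc t₀ t₂, a ≤ b → G a ≤ G b := by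
      intro a ha b hb hab
      have h := hGdiff a ha b hb
      have h2 : 0 ≤ ∫ s in a..b, f s := by
        apply intervalIntegral.integral_nonneg hab
        intro u hu
        exact hfnonneg u (hsub ⟨ha.1.trans hu.1, hu.2.trans hb.2⟩)
      linarith
    have hGt₀ : G t₀ = 0 := by simp [hG]
    have hGnonneg : ∀ a ∈ Icc t₀ t₂, 0 ≤ G a := fun a ha =>
      hGt₀ ▸ hGmono t₀ ht₀mem a ha ha.1
    have hLG : ∀ s ∈ Icc t₀ t₂, L s ≤ G s := fun s hs => hL s (hsub hs)
    have hGcont : ContinuousOn G (Icc t₀ t₂) := by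
      have h := intervalIntegral.continuousOn_primitive_interval
        (μ := volume) (f := f) (a := t₀) (b := t₂) (by rwa [uIcc_of_le ht₀₂])
      rwa [uIcc_of_le ht₀₂] at h
    have hkey : ∀ a ∈ Icc t₀ t₂, ∀ b ∈ Icc t₀ t₂, a ≤ b →
        G b - G a ≤ μ (G b) * ∫ s in a..b, γ s := by
      intro a ha b hb hab
      rw [hGdiff a ha b hb]
      have h1 : ∫ s in a..b, f s ≤ ∫ s in a..b, μ (G b) * γ s := by
        apply intervalIntegral.integral_mono_on hab (hfii a ha b hb)
          ((hγii a (hsub ha) b (hsub hb)).const_mul _)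
        intro x hx
        have hxm : x ∈ Icc t₀ t₂ := ⟨ha.1.trans hx.1, hx.2.trans hb.2⟩
        have hLx : 0 ≤ L x := hLnonneg x (hsub hxm)
        have h2 : L x ≤ G b := (hLG x hxm).trans (hGmono x hxm b hb hx.2)
        have h3 : μ (L x) ≤ μ (G b) := hμmono hLx (hLx.trans h2) h2
        calc γ x * μ (L x) ≤ γ x * μ (G b) :=
              mul_le_mul_of_nonneg_left h3 (hγpos x (hsub hxm)).le
          _ = μ (G b) * γ x := mul_comm _ _
      rwa [intervalIntegral.integral_const_mul] at h1
    rcases le_or_gt (G t₂) 0 with hG2 | hG2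
    · exact le_antisymm ((hLG t₂ ht₂mem).trans hG2) (hLnonneg t₂ ht₂)
    exfalso
    -- the set where μ vanishes
    set Z := Icc (0:ℝ) 1 ∩ μ ⁻¹' {0} with hZdef
    have hZc : IsClosed Z :=
      (hμc.mono Icc_subset_Ici_self).preimage_isClosed_of_isClosed isClosed_Icc
        isClosed_singleton
    have h0Z : (0:ℝ) ∈ Z := ⟨⟨le_refl 0, zero_le_one⟩, hμ0⟩
    have hZbdd : BddAbove Z := ⟨1, fun x hx => hx.1.2⟩
    set d := sSup Z with hd
    have hdZ : d ∈ Z := hZc.csSup_mem ⟨0, h0Z⟩ hZbdd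
    have hd0 : 0 ≤ d := le_csSup hZbdd h0Z
    have hd1 : d ≤ 1 := hdZ.1.2
    have hμd : μ d = 0 := hdZ.2
    have hμzero : ∀ x, 0 ≤ x → x ≤ d → μ x = 0 := fun x hx hxd =>
      le_antisymm (hμd ▸ hμmono hx hd0 hxd) (hμnonneg x hx)
    have hdlt1 : d < 1 := by
      by_contra h
      push_neg at h
      have hz : ∫⁻ s in Ioo (0:ℝ) 1, ENNReal.ofReal (1 / μ s) = 0 := by
        rw [setLIntegral_congr_fun measurableSet_Ioo
          (fun s hs => ?_), lintegral_zero]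
        rw [hμzero s hs.1.le (hs.2.le.trans h)]
        simp
      rw [hz] at hμdiv
      simp at hμdiv
    have hμpos1 : ∀ x, d < x → x ≤ 1 → 0 < μ x := by
      intro x hx hx1
      have hx0 : 0 ≤ x := hd0.trans hx.le
      rcases (hμnonneg x hx0).lt_or_eq with h | h
      · exact h
      · exact absurd (le_csSup hZbdd ⟨⟨hx0, hx1⟩, h.symm⟩) (not_le.2 hx)
    have hμposd : ∀ x, d < x → 0 < μ x := by
      intro x hx
      rcases le_or_gt x 1 with h1 | h1
      · exact hμpos1 x hx h1
      · have hm : 0 < μ ((d+1)/2) := hμpos1 _ (by linarith) (by linarith)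
        exact hm.trans_le (hμmono (show (d+1)/2 ∈ Ici (0:ℝ) by simp; linarith)
          (show x ∈ Ici (0:ℝ) by simp; linarith) (by linarith))
    -- T : last time G ≤ d
    set S0 := Icc t₀ t₂ ∩ G ⁻¹' (Iic d) with hS0def
    have hS0c : IsClosed S0 :=
      hGcont.preimage_isClosed_of_isClosed isClosed_Icc isClosed_Iic
    have ht₀S0 : t₀ ∈ S0 := ⟨ht₀mem, by simp [hGt₀, hd0]⟩
    have hS0bdd : BddAbove S0 := ⟨t₂, fun x hx => hx.1.2⟩
    set T := sSup S0 with hT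
    have hTS0 : T ∈ S0 := hS0c.csSup_mem ⟨t₀, ht₀S0⟩ hS0bdd
    have hTmem : T ∈ Icc t₀ t₂ := hTS0.1
    have hGTd : G T ≤ d := hTS0.2
    have hGT0 : G T = 0 := by
      have heq : EqOn f (fun _ => (0:ℝ)) (uIcc t₀ T) := by
        intro s hs
        rw [uIcc_of_le hTmem.1] at hs
        have hsmem : s ∈ Icc t₀ t₂ := ⟨hs.1, hs.2.trans hTmem.2⟩
        have h1 : L s ≤ d := (hLG s hsmem).trans ((hGmono s hsmem T hTmem hs.2).trans hGTd)
        simp only [hf]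
        rw [hμzero (L s) (hLnonneg s (hsub hsmem)) h1, mul_zero]
      have h := intervalIntegral.integral_congr (μ := volume) heq
      simpa [hG] using h
    have hTlt : ∀ t ∈ Icc t₀ t₂, T < t → d < G t := by
      intro t h1 h2
      by_contra h
      push_neg at h
      exact absurd (le_csSup hS0bdd ⟨h1, h⟩) (not_le.2 h2)
    have hGt₂d : d < G t₂ := by
      rcases eq_or_lt_of_le hTmem.2 with h | h
      · exact absurd (h ▸ hGT0) (by rw [h] at hGT0; linarith)
      · exact hTlt t₂ ht₂mem h
    have hd_eq : d = 0 := by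
      by_contra hdne
      have hdpos : 0 < d := lt_of_le_of_ne hd0 (Ne.symm hdne)
      have hiv := intermediate_value_Icc hTmem.2 (hGcont.mono (Icc_subset_Icc_left hTmem.1))
      have hmem : d/2 ∈ Icc (G T) (G t₂) := by
        rw [hGT0]; exact ⟨by linarith, by linarith⟩
      obtain ⟨τ, hτmem, hτ⟩ := hiv hmem
      have hτT : T < τ := by
        rcases eq_or_lt_of_le hτmem.1 with h | h
        · exfalso; rw [← h, hGT0] at hτ; linarith
        · exact h
      have := hTlt τ ⟨hTmem.1.trans hτmem.1, hτmem.2⟩ hτT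
      linarith [hτ ▸ this]
    have hμpos' : ∀ x : ℝ, 0 < x → 0 < μ x := fun x hx => hμposd x (hd_eq ▸ hx)
    have hTlt' : ∀ t ∈ Icc t₀ t₂, T < t → 0 < G t := fun t h1 h2 => hd_eq ▸ hTlt t h1 h2
    -- divergence near 0 on (0, 1/2)
    set e : ℝ := 1/2 with he
    have hepos : (0:ℝ) < e := by norm_num [he]
    have helt1 : e < 1 := by norm_num [he]
    have hdiv2 : ∫⁻ s in Ioo (0:ℝ) e, ENNReal.ofReal (1 / μ s) = ⊤ := by
      by_contra hfin
      have hbound : ∫⁻ s in Ico e 1, ENNReal.ofReal (1 / μ s)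
          ≤ ENNReal.ofReal (1 / μ e) * volume (Ico e 1) := by
        refine le_trans (setLIntegral_mono measurable_const ?_)
          (le_of_eq (setLIntegral_const _ _))
        intro x hx
        apply ENNReal.ofReal_le_ofReal
        apply one_div_le_one_div_of_le (hμpos' e hepos)
        exact hμmono hepos.le (hepos.le.trans hx.1) hx.1
      have hsplit : Ioo (0:ℝ) 1 = Ioo 0 e ∪ Ico e 1 :=
        (Ioo_union_Ico_eq_Ioo hepos helt1.le).symm
      rw [hsplit, lintegral_union measurableSet_Ico
        (by rw [Set.disjoint_left]; intro x hx hx2; exact absurd hx2.1 (not_le.2 hx.2))] at hμdiv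
      have hBfin : ENNReal.ofReal (1 / μ e) * volume (Ico e 1) < ⊤ :=
        ENNReal.mul_lt_top ENNReal.ofReal_lt_top (by simp [Real.volume_Ico])
      exact absurd hμdiv (ENNReal.add_ne_top.2 ⟨hfin, (lt_of_le_of_lt hbound hBfin).ne⟩)
    -- ρ = 1/μ and its primitive Ψ
    set ρ : ℝ → ℝ := fun x => (μ x)⁻¹ with hρ
    have hρcont : ContinuousOn ρ (Ioi 0) :=
      (hμc.mono Ioi_subset_Ici_self).inv₀ (fun x hx => (hμpos' x hx).ne')
    have hρii : ∀ a b : ℝ, 0 < a → 0 < b → IntervalIntegrable ρ volume a b := by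
      intro a b ha hb
      apply ContinuousOn.intervalIntegrable
      apply hρcont.mono
      intro x hx
      exact lt_of_lt_of_le (lt_min ha hb) hx.1
    set Ψ : ℝ → ℝ := fun x => ∫ s in e..x, ρ s with hΨ
    have hstep : ∀ a b : ℝ, 0 < a → a ≤ b → Ψ b - Ψ a ≤ (b - a) * ρ a := by
      intro a b ha hab
      have hb : 0 < b := ha.trans_le hab
      have h1 : Ψ a + ∫ s in a..b, ρ s = Ψ b :=
        intervalIntegral.integral_add_adjacent_intervals (hρii e a hepos ha) (hρii a b ha hb)
      have h2 : ∫ s in a..b, ρ s ≤ ∫ s in a..b, ρ a := by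
        apply intervalIntegral.integral_mono_on hab (hρii a b ha hb) intervalIntegrable_const
        intro x hx
        exact (by simpa only [one_div] using one_div_le_one_div_of_le (hμpos' a ha) (hμmono ha.le (ha.le.trans hx.1) hx.1) : (μ x)⁻¹ ≤ (μ a)⁻¹)
      rw [intervalIntegral.integral_const, smul_eq_mul, mul_comm] at h2
      linarith
    have hμGcont : ContinuousOn (fun t => μ (G t)) (Icc t₀ t₂) :=
      hμc.comp hGcont (fun x hx => hGnonneg x hx)
    -- main continuous-induction inequality
    have hmain : ∀ τ₀ ∈ Icc t₀ t₂, T < τ₀ →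
        Ψ (G t₂) ≤ Ψ (G τ₀) + 2 * ∫ s in τ₀..t₂, γ s := by
      intro τ₀ hτ₀ hTτ₀
      have hGτ₀pos : 0 < G τ₀ := hTlt' τ₀ hτ₀ hTτ₀
      have hGG : G τ₀ ≤ G t₂ := hGmono τ₀ hτ₀ t₂ ht₂mem hτ₀.2
      have hΨGcont : ContinuousOn (fun t => Ψ (G t)) (Icc τ₀ t₂) := by
        have hρint : IntegrableOn ρ (Icc (G τ₀) (G t₂)) := by
          apply ContinuousOn.integrableOn_Icc
          apply hρcont.mono
          intro x hx
          exact lt_of_lt_of_le hGτ₀pos hx.1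
        have hprim : ContinuousOn (fun x => ∫ s in (G τ₀)..x, ρ s) (Icc (G τ₀) (G t₂)) := by
          have h := intervalIntegral.continuousOn_primitive_interval
            (μ := volume) (f := ρ) (a := G τ₀) (b := G t₂) (by rwa [uIcc_of_le hGG])
          rwa [uIcc_of_le hGG] at h
        have hΨc : ContinuousOn Ψ (Icc (G τ₀) (G t₂)) := by
          apply ContinuousOn.congr ((continuousOn_const (c := Ψ (G τ₀))).add hprim)
          intro x hx
          have : Ψ (G τ₀) + ∫ s in (G τ₀)..x, ρ s = Ψ x :=
            intervalIntegral.integral_add_adjacent_intervals (hρii e (G τ₀) hepos hGτ₀pos)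
              (hρii (G τ₀) x hGτ₀pos (lt_of_lt_of_le hGτ₀pos hx.1))
          rw [← this]
          rfl
        apply hΨc.comp (hGcont.mono (Icc_subset_Icc_left hτ₀.1))
        intro x hx
        have hxm : x ∈ Icc t₀ t₂ := ⟨hτ₀.1.trans hx.1, hx.2⟩
        exact ⟨hGmono τ₀ hτ₀ x hxm hx.1, hGmono x hxm t₂ ht₂mem hx.2⟩
      have hγprim : ContinuousOn (fun t => ∫ s in τ₀..t, γ s) (Icc τ₀ t₂) := by
        have h := intervalIntegral.continuousOn_primitive_interval
          (μ := volume) (f := γ) (a := τ₀) (b := t₂)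
          (by rw [uIcc_of_le hτ₀.2]
              exact hγint.mono_set (Icc_subset_Icc hτ₀.1 ht₂.2))
        rwa [uIcc_of_le hτ₀.2] at h
      set S := Icc τ₀ t₂ ∩
        (fun t => Ψ (G t) - (Ψ (G τ₀) + 2 * ∫ s in τ₀..t, γ s)) ⁻¹' Iic 0 with hSdef
      have hScl : IsClosed S := by
        apply ContinuousOn.preimage_isClosed_of_isClosed _ isClosed_Icc isClosed_Iic
        exact hΨGcont.sub (continuousOn_const.add (continuousOn_const.mul hγprim))
      have hτ₀S : τ₀ ∈ S := by
        constructor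
        · exact left_mem_Icc.2 hτ₀.2
        · simp [mem_preimage]
      have hSbdd : BddAbove S := ⟨t₂, fun x hx => hx.1.2⟩
      set B := sSup S with hB
      have hBS : B ∈ S := hScl.csSup_mem ⟨τ₀, hτ₀S⟩ hSbdd
      have hBmem' : B ∈ Icc τ₀ t₂ := hBS.1
      have hBmem : B ∈ Icc t₀ t₂ := ⟨hτ₀.1.trans hBmem'.1, hBmem'.2⟩
      have hBineq : Ψ (G B) ≤ Ψ (G τ₀) + 2 * ∫ s in τ₀..B, γ s := by
        have h := hBS.2
        simp only [mem_preimage, mem_Iic, sub_nonpos] at h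
        exact h
      have hBt₂ : B = t₂ := by
        by_contra hne
        have hBlt : B < t₂ := lt_of_le_of_ne hBmem'.2 hne
        have hGBpos : 0 < G B := hTlt' B hBmem (hTτ₀.trans_le hBmem'.1)
        have hμGBpos : 0 < μ (G B) := hμpos' _ hGBpos
        have hcw : Tendsto (fun t => μ (G t)) (𝓝[Icc t₀ t₂] B) (𝓝 (μ (G B))) :=
          hμGcont B hBmem
        have hev : (fun t => μ (G t)) ⁻¹' (Iio (2 * μ (G B))) ∈ 𝓝[Icc t₀ t₂] B :=
          hcw (Iio_mem_nhds (by linarith))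
        obtain ⟨ε, hε, hball⟩ := Metric.mem_nhdsWithin_iff.1 hev
        set t := min (B + ε/2) t₂ with htdef
        have hBt : B < t := lt_min (by linarith) hBlt
        have htmem : t ∈ Icc t₀ t₂ := ⟨hBmem.1.trans hBt.le, min_le_right _ _⟩
        have htball : t ∈ Metric.ball B ε := by
          rw [Metric.mem_ball, Real.dist_eq, abs_of_pos (by linarith)]
          have : t ≤ B + ε/2 := min_le_left _ _
          linarith
        have hμt : μ (G t) < 2 * μ (G B) := hball ⟨htball, htmem⟩
        have hGBt : G B ≤ G t := hGmono B hBmem t htmem hBt.le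
        have hIγ : 0 ≤ ∫ s in B..t, γ s := by
          apply intervalIntegral.integral_nonneg hBt.le
          intro u hu
          exact (hγpos u (hsub ⟨hBmem.1.trans hu.1, hu.2.trans htmem.2⟩)).le
        have h7 : G t - G B ≤ μ (G t) * ∫ s in B..t, γ s := hkey B hBmem t htmem hBt.le
        have hstepBt : Ψ (G t) - Ψ (G B) ≤ (G t - G B) * ρ (G B) := hstep _ _ hGBpos hGBt
        have hcomb : Ψ (G t) - Ψ (G B) ≤ 2 * ∫ s in B..t, γ s := by
          have h8 : (G t - G B) * (μ (G B))⁻¹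
              ≤ (μ (G t) * ∫ s in B..t, γ s) * (μ (G B))⁻¹ :=
            mul_le_mul_of_nonneg_right h7 (inv_nonneg.2 hμGBpos.le)
          have h9 : (μ (G t) * ∫ s in B..t, γ s) * (μ (G B))⁻¹
              ≤ (2 * μ (G B) * ∫ s in B..t, γ s) * (μ (G B))⁻¹ := by
            apply mul_le_mul_of_nonneg_right _ (inv_nonneg.2 hμGBpos.le)
            exact mul_le_mul_of_nonneg_right hμt.le hIγ
          have h10 : (2 * μ (G B) * ∫ s in B..t, γ s) * (μ (G B))⁻¹
              = 2 * ∫ s in B..t, γ s := by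
            field_simp
          have hρB : ρ (G B) = (μ (G B))⁻¹ := rfl
          rw [hρB] at hstepBt
          linarith
        have hadd : (∫ s in τ₀..B, γ s) + ∫ s in B..t, γ s = ∫ s in τ₀..t, γ s :=
          intervalIntegral.integral_add_adjacent_intervals
            (hγii τ₀ (hsub hτ₀) B (hsub hBmem)) (hγii B (hsub hBmem) t (hsub htmem))
        have htS : t ∈ S := by
          refine ⟨⟨hBmem'.1.trans hBt.le, min_le_right _ _⟩, ?_⟩
          simp only [mem_preimage, mem_Iic, sub_nonpos]
          linarith
        exact absurd (le_csSup hSbdd htS) (not_le.2 hBt)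
      rw [hBt₂] at hBineq
      exact hBineq
    -- assemble: Ψ (G τ₀) is bounded below, i.e. ∫_{G τ₀}^e ρ is bounded above
    set Γ := ∫ s in Icc t₀ t₁, γ s with hΓdef
    have hΓbound : ∀ τ₀ ∈ Icc t₀ t₂, ∫ s in τ₀..t₂, γ s ≤ Γ := by
      intro τ₀ hτ₀
      rw [intervalIntegral.integral_of_le hτ₀.2]
      apply setIntegral_mono_set hγint
      · exact ae_restrict_of_forall_mem measurableSet_Icc (fun x hx => (hγpos x hx).le)
      · exact HasSubset.Subset.eventuallyLE
          (Ioc_subset_Icc_self.trans (Icc_subset_Icc (hτ₀.1.trans' (le_refl t₀)) ht₂.2))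
    set M := 2 * Γ - Ψ (G t₂) with hM
    have hRbound : ∀ τ₀ ∈ Icc t₀ t₂, T < τ₀ → ∫ s in (G τ₀)..e, ρ s ≤ M := by
      intro τ₀ h1 h2
      have ha := hmain τ₀ h1 h2
      have hb := hΓbound τ₀ h1
      have hsym : Ψ (G τ₀) = -∫ s in (G τ₀)..e, ρ s := intervalIntegral.integral_symm _ _
      rw [hsym] at ha
      simp only [hM]
      linarith
    have hvals : ∀ y : ℝ, 0 < y → y < G t₂ → ∃ τ ∈ Icc t₀ t₂, T < τ ∧ G τ = y := by
      intro y hy hy2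
      have hiv := intermediate_value_Icc hTmem.2 (hGcont.mono (Icc_subset_Icc_left hTmem.1))
      obtain ⟨τ, hτmem, hτ⟩ := hiv (show y ∈ Icc (G T) (G t₂) by
        rw [hGT0]; exact ⟨hy.le, hy2.le⟩)
      refine ⟨τ, ⟨hTmem.1.trans hτmem.1, hτmem.2⟩, ?_, hτ⟩
      rcases eq_or_lt_of_le hτmem.1 with h | h
      · exfalso; rw [← h, hGT0] at hτ; linarith
      · exact h
    have hlint : ∀ y : ℝ, 0 < y → y < G t₂ → y < e →
        ∫⁻ s in Ioo y e, ENNReal.ofReal (1 / μ s) ≤ ENNReal.ofReal M := by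
      intro y hy hy2 hye
      obtain ⟨τ, hτm, hτT, hτG⟩ := hvals y hy hy2
      have hR := hRbound τ hτm hτT
      rw [hτG] at hR
      have hρint : IntegrableOn ρ (Ioo y e) := by
        refine IntegrableOn.mono_set ?_ Ioo_subset_Icc_self
        apply ContinuousOn.integrableOn_Icc
        apply hρcont.mono
        intro x hx
        exact lt_of_lt_of_le hy hx.1
      have hnn : 0 ≤ᵐ[volume.restrict (Ioo y e)] ρ :=
        ae_restrict_of_forall_mem measurableSet_Ioo
          (fun x hx => inv_nonneg.2 (hμnonneg _ (hy.le.trans hx.1.le)))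
      have hc := ofReal_integral_eq_lintegral_ofReal hρint hnn
      have heq2 : ∫ s in Ioo y e, ρ s = ∫ s in y..e, ρ s := by
        rw [intervalIntegral.integral_of_le hye.le, integral_Ioc_eq_integral_Ioo]
      calc ∫⁻ s in Ioo y e, ENNReal.ofReal (1 / μ s)
          = ∫⁻ s in Ioo y e, ENNReal.ofReal (ρ s) := by
            apply lintegral_congr
            intro x
            rw [one_div]
        _ = ENNReal.ofReal (∫ s in Ioo y e, ρ s) := hc.symm
        _ ≤ ENNReal.ofReal M := ENNReal.ofReal_le_ofReal (heq2 ▸ hR)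
    -- final contradiction via monotone union
    set c := min e (G t₂) / 2 with hc
    have hcpos : 0 < c := div_pos (lt_min hepos hG2) two_pos
    have hclt : c < min e (G t₂) := half_lt_self (lt_min hepos hG2)
    have hunion : ⋃ n : ℕ, Ioo (c / (n+1)) e = Ioo 0 e := by
      ext x
      simp only [mem_iUnion, mem_Ioo]
      constructor
      · rintro ⟨n, h1, h2⟩
        refine ⟨lt_trans ?_ h1, h2⟩
        positivity
      · rintro ⟨h1, h2⟩
        obtain ⟨n, hn⟩ := exists_nat_gt (c / x)
        refine ⟨n, ?_, h2⟩
        rw [div_lt_iff₀ (by positivity)]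
        have hn1 : c / x < (n:ℝ) + 1 := hn.trans (by linarith)
        calc c = (c / x) * x := by field_simp
          _ < ((n:ℝ) + 1) * x := mul_lt_mul_of_pos_right hn1 h1
          _ = x * ((n:ℝ) + 1) := mul_comm _ _
    have hdirected : Directed (· ⊆ ·) (fun n : ℕ => Ioo (c / (n+1)) e) := by
      have hmono : Monotone (fun n : ℕ => Ioo (c / (n+1)) e) := by
        intro m n hmn
        apply Ioo_subset_Ioo_left
        apply div_le_div_of_nonneg_left hcpos.le (by positivity)
        have : (m:ℝ) ≤ n := Nat.cast_le.2 hmn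
        linarith
      exact hmono.directed_le
    set ν := volume.withDensity (fun s => ENNReal.ofReal (1 / μ s)) with hν
    have hνapp : ∀ s : Set ℝ, MeasurableSet s →
        ν s = ∫⁻ x in s, ENNReal.ofReal (1 / μ x) := fun s hs => withDensity_apply _ hs
    have h1 : ν (⋃ n : ℕ, Ioo (c / (n+1)) e) = ⊤ := by
      rw [hunion, hνapp _ measurableSet_Ioo]
      exact hdiv2
    rw [Directed.measure_iUnion hdirected] at h1
    have h2 : ∀ n : ℕ, ν (Ioo (c / (n+1)) e) ≤ ENNReal.ofReal M := by
      intro n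
      rw [hνapp _ measurableSet_Ioo]
      have hy0 : (0:ℝ) < c / (n+1) := by positivity
      have hyc : c / (n+1) ≤ c := by
        apply div_le_self hcpos.le
        have : (0:ℝ) ≤ n := Nat.cast_nonneg n
        linarith
      apply hlint _ hy0
      · exact lt_of_le_of_lt hyc (hclt.trans_le (min_le_right _ _))
      · exact lt_of_le_of_lt hyc (hclt.trans_le (min_le_left _ _))
    have h3 : (⊤ : ENNReal) ≤ ENNReal.ofReal M := h1 ▸ iSup_le h2
    exact ENNReal.ofReal_ne_top (top_le_iff.1 h3)
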